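/- Let E be a real inner product space, J : E → ℝ differentiable with gradient ∇J that is L-Lipschitz (L > 0), J bounded below by J_inf, and let σ ≥ 0. Let T ≥ 1 be an integer with T ≥ L², and set η := 1/√T, so that η ∈ (0, 1/L]. Let (Ω, 𝒜, P) be a probability space with filtration (𝓕_t)_{t∈ℕ}, and let (W_t)_{t≥0}, (G_t)_{t≥0} be E-valued random variables such that W_t is 𝓕_t-measurable, W_{t+1} = W_t − η·G_t, and almost surely E[G_t | 𝓕_t] = ∇J(W_t) and E[‖G_t − ∇J(W_t)‖² | 𝓕_t] ≤ σ², with J(W_t) and ‖G_t‖² integrable for all t. Then min_{0 ≤ t ≤ T−1} E[‖∇J(W_t)‖²] ≤ (2·(E[J(W_0)] − J_inf) + L·σ²)/√T; that is, the minimal expected squared gradient norm over the first T iterates is O(1/√T). -/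

import Mathlib

open MeasureTheory RealInnerProductSpace

lemma sgd_descent {E : Type*} [NormedAddCommGroup E] [InnerProductSpace ℝ E]
    [CompleteSpace E] {J : E → ℝ} {L : ℝ} (hL : 0 ≤ L)
    (hdiff : Differentiable ℝ J)
    (hlip : ∀ x y : E, ‖gradient J x - gradient J y‖ ≤ L * ‖x - y‖)
    (x y : E) : J y ≤ J x + ⟪gradient J x, y - x⟫ + L / 2 * ‖y - x‖ ^ 2 := by
  set v := y - x with hv
  have hgcont : Continuous (gradient J) := by
    refine (LipschitzWith.of_dist_le_mul (K := L.toNNReal) fun a b => ?_).continuous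
    rw [dist_eq_norm, dist_eq_norm, Real.coe_toNNReal L hL]
    exact hlip a b
  have hline : ∀ s : ℝ, HasDerivAt (fun s : ℝ => x + s • v) v s := fun s => by
    simpa using ((hasDerivAt_id s).smul_const v).const_add x
  have hφ : ∀ s : ℝ, HasDerivAt (fun s : ℝ => J (x + s • v))
      (⟪gradient J (x + s • v), v⟫) s := by
    intro s
    have h1 := (hdiff (x + s • v)).hasGradientAt.hasFDerivAt
    have := h1.comp_hasDerivAt s (hline s)
    simpa [Function.comp_def] using this
  have hcont : Continuous fun s : ℝ => ⟪gradient J (x + s • v), v⟫ := by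
    exact (hgcont.comp (by continuity)).inner continuous_const
  have hftc : J (x + (1:ℝ) • v) - J (x + (0:ℝ) • v)
      = ∫ s in (0:ℝ)..1, ⟪gradient J (x + s • v), v⟫ := by
    refine (intervalIntegral.integral_eq_sub_of_hasDerivAt (fun s _ => hφ s)
      (hcont.intervalIntegrable 0 1)).symm
  have hbound : ∫ s in (0:ℝ)..1, ⟪gradient J (x + s • v), v⟫
      ≤ ∫ s in (0:ℝ)..1, (⟪gradient J x, v⟫ + L * s * ‖v‖ ^ 2) := by
    refine intervalIntegral.integral_mono_on zero_le_one (hcont.intervalIntegrable 0 1)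
      ((by continuity : Continuous fun s : ℝ => ⟪gradient J x, v⟫ + L * s * ‖v‖ ^ 2).intervalIntegrable 0 1) ?_
    intro s hs
    have h1 : ⟪gradient J (x + s • v), v⟫ - ⟪gradient J x, v⟫
        = ⟪gradient J (x + s • v) - gradient J x, v⟫ := by rw [inner_sub_left]
    have h2 : ⟪gradient J (x + s • v) - gradient J x, v⟫ ≤ L * s * ‖v‖ ^ 2 := by
      calc ⟪gradient J (x + s • v) - gradient J x, v⟫
          ≤ ‖gradient J (x + s • v) - gradient J x‖ * ‖v‖ := real_inner_le_norm _ _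
        _ ≤ (L * ‖(x + s • v) - x‖) * ‖v‖ :=
            mul_le_mul_of_nonneg_right (hlip _ _) (norm_nonneg _)
        _ = L * s * ‖v‖ ^ 2 := by
            rw [add_sub_cancel_left, norm_smul, Real.norm_eq_abs, abs_of_nonneg hs.1]
            ring
    linarith
  have hval : ∫ s in (0:ℝ)..1, (⟪gradient J x, v⟫ + L * s * ‖v‖ ^ 2)
      = ⟪gradient J x, v⟫ + L / 2 * ‖v‖ ^ 2 := by
    rw [intervalIntegral.integral_add (intervalIntegrable_const)
      ((by continuity : Continuous fun s : ℝ => L * s * ‖v‖ ^ 2).intervalIntegrable 0 1)]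
    simp only [intervalIntegral.integral_const, smul_eq_mul, mul_one, sub_zero, one_smul]
    have : ∫ s in (0:ℝ)..1, L * s * ‖v‖ ^ 2 = L / 2 * ‖v‖ ^ 2 := by
      have heq : (fun s : ℝ => L * s * ‖v‖ ^ 2) = fun s : ℝ => (L * ‖v‖ ^ 2) * s := by
        ext s; ring
      rw [heq, intervalIntegral.integral_const_mul, integral_id]
      ring
    rw [this]; ring
  have hfin := hftc ▸ (hbound.trans_eq hval)
  simp only [one_smul, zero_smul, add_zero] at hfin
  have hxy : x + v = y := by rw [hv]; abel
  rw [hxy] at hfin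
  linarith

lemma sgd_grad_sq_le {E : Type*} [NormedAddCommGroup E] [InnerProductSpace ℝ E]
    [CompleteSpace E] {J : E → ℝ} {L Jinf : ℝ} (hL : 0 < L)
    (hdiff : Differentiable ℝ J)
    (hlip : ∀ x y : E, ‖gradient J x - gradient J y‖ ≤ L * ‖x - y‖)
    (hbd : ∀ x : E, Jinf ≤ J x) (x : E) :
    ‖gradient J x‖ ^ 2 ≤ 2 * L * (J x - Jinf) := by
  have h := sgd_descent hL.le hdiff hlip x (x - L⁻¹ • gradient J x)
  have h1 : (x - L⁻¹ • gradient J x) - x = -(L⁻¹ • gradient J x) := by abel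
  rw [h1] at h
  have h2 : ⟪gradient J x, -(L⁻¹ • gradient J x)⟫ = -(L⁻¹ * ‖gradient J x‖ ^ 2) := by
    rw [inner_neg_right, real_inner_smul_right, real_inner_self_eq_norm_sq]
  have h3 : ‖-(L⁻¹ • gradient J x)‖ ^ 2 = L⁻¹ ^ 2 * ‖gradient J x‖ ^ 2 := by
    rw [norm_neg, norm_smul, Real.norm_eq_abs, abs_of_nonneg (by positivity)]
    ring
  rw [h2, h3] at h
  have h4 := hbd (x - L⁻¹ • gradient J x)
  have hL' : L ≠ 0 := hL.ne'
  have : L / 2 * (L⁻¹ ^ 2 * ‖gradient J x‖ ^ 2) = (2 * L)⁻¹ * ‖gradient J x‖ ^ 2 := by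
    field_simp
  rw [this] at h
  have h5 : L⁻¹ * ‖gradient J x‖ ^ 2 - (2 * L)⁻¹ * ‖gradient J x‖ ^ 2
      = (2 * L)⁻¹ * ‖gradient J x‖ ^ 2 := by field_simp; ring
  have h6 : (2 * L)⁻¹ * ‖gradient J x‖ ^ 2 ≤ J x - Jinf := by linarith
  have h7 : ‖gradient J x‖ ^ 2 = 2 * L * ((2 * L)⁻¹ * ‖gradient J x‖ ^ 2) := by
    field_simp
  rw [h7]
  have h8 : (0:ℝ) < 2 * L := by linarith
  exact mul_le_mul_of_nonneg_left h6 h8.le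


lemma sgd_integral_inner_condexp {α : Type*} {m mα : MeasurableSpace α} {μ : Measure α}
    [IsFiniteMeasure μ] (hm : m ≤ mα)
    {E : Type*} [NormedAddCommGroup E] [InnerProductSpace ℝ E] [CompleteSpace E]
    {f g : α → E} (hfm : AEStronglyMeasurable[m] f μ)
    (hf2 : MemLp f 2 μ) (hg2 : MemLp g 2 μ) :
    ∫ ω, ⟪f ω, g ω⟫ ∂μ = ∫ ω, ⟪f ω, (μ[g|m]) ω⟫ ∂μ := by
  haveI : SigmaFinite (μ.trim hm) := by infer_instance
  set F : Lp E 2 μ := hf2.toLp f with hF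
  set Gp : Lp E 2 μ := hg2.toLp g with hG
  have hFf : F =ᵐ[μ] f := hf2.coeFn_toLp
  have hGg : Gp =ᵐ[μ] g := hg2.coeFn_toLp
  have hcond : (condExpL2 E ℝ hm Gp : α → E) =ᵐ[μ] μ[g|m] := by
    refine ae_eq_condExp_of_forall_setIntegral_eq hm (memLp_one_iff_integrable.mp
        (hg2.mono_exponent (by norm_num)))
      (fun s _ hs => integrableOn_condExpL2_of_measure_ne_top hm hs.ne Gp)
      (fun s hs hμs => ?_) (aestronglyMeasurable_condExpL2 hm Gp)
    rw [integral_condExpL2_eq hm Gp hs hμs.ne]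
    exact setIntegral_congr_ae (hm s hs) (hGg.mono fun x hx _ => hx)
  have hFm : AEStronglyMeasurable[m] (F : α → E) μ := hfm.congr hFf.symm
  have hinner : @inner ℝ _ _ ((condExpL2 E ℝ hm Gp : Lp E 2 μ)) F
      = @inner ℝ _ _ Gp F := inner_condExpL2_eq_inner_fun hm Gp F hFm
  rw [L2.inner_def, L2.inner_def] at hinner
  calc ∫ ω, ⟪f ω, g ω⟫ ∂μ = ∫ ω, ⟪Gp ω, F ω⟫ ∂μ := by
        refine integral_congr_ae ?_
        filter_upwards [hFf, hGg] with ω h1 h2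
        rw [h1, h2, real_inner_comm]
    _ = ∫ ω, ⟪(condExpL2 E ℝ hm Gp : α → E) ω, F ω⟫ ∂μ := hinner.symm
    _ = ∫ ω, ⟪f ω, (μ[g|m]) ω⟫ ∂μ := by
        refine integral_congr_ae ?_
        filter_upwards [hFf, hcond] with ω h1 h2
        rw [h1, h2, real_inner_comm]


/-- **`O(1/√T)` stationarity of SGD**: with step size `η = 1/√T` (valid since `T ≥ L²` gives
`η ∈ (0, 1/L]`), the minimal expected squared gradient norm over the first `T` SGD iterates
is at most `(2 (E[J(W 0)] - Jinf) + L σ²)/√T`. -/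

theorem sgd_min_expected_sq_grad_le_sqrt
    {E : Type*} [NormedAddCommGroup E] [InnerProductSpace ℝ E] [CompleteSpace E]
    {Ω : Type*} {mΩ : MeasurableSpace Ω} {μ : Measure Ω} [IsProbabilityMeasure μ]
    (ℱ : Filtration ℕ mΩ)
    (J : E → ℝ) (L Jinf σ η : ℝ)
    (hL : 0 < L)
    (hdiff : Differentiable ℝ J)
    (hlip : ∀ x y : E, ‖gradient J x - gradient J y‖ ≤ L * ‖x - y‖)
    (hbd : ∀ x : E, Jinf ≤ J x)
    (hσ : 0 ≤ σ)
    (T : ℕ) (hT : 1 ≤ T) (hTL : L ^ 2 ≤ (T : ℝ))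
    (hηdef : η = 1 / Real.sqrt T)
    (W G : ℕ → Ω → E)
    (hWmeas : ∀ t, StronglyMeasurable[ℱ t] (W t))
    (hrec : ∀ t ω, W (t + 1) ω = W t ω - η • G t ω)
    (hmean : ∀ t, μ[G t | ℱ t] =ᵐ[μ] fun ω => gradient J (W t ω))
    (hvar : ∀ t, ∀ᵐ ω ∂μ,
      (μ[fun ω' => ‖G t ω' - gradient J (W t ω')‖ ^ 2 | ℱ t]) ω ≤ σ ^ 2)
    (hJint : ∀ t, Integrable (fun ω => J (W t ω)) μ)
    (hGint : ∀ t, Integrable (fun ω => ‖G t ω‖ ^ 2) μ) :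
    (Finset.range T).inf' (Finset.nonempty_range_iff.mpr (by omega))
        (fun t => ∫ ω, ‖gradient J (W t ω)‖ ^ 2 ∂μ)
      ≤ (2 * ((∫ ω, J (W 0 ω) ∂μ) - Jinf) + L * σ ^ 2) / Real.sqrt T := by
  have hT0 : (0:ℝ) < T := by exact_mod_cast hT
  set s : ℝ := Real.sqrt T with hs_def
  have hs : 0 < s := Real.sqrt_pos.mpr hT0
  have hss : s * s = (T:ℝ) := Real.mul_self_sqrt hT0.le
  have hη : 0 < η := by rw [hηdef]; positivity
  have hLs : L ≤ s := by
    have := Real.sqrt_le_sqrt hTL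
    rwa [Real.sqrt_sq hL.le] at this
  have hLη : L * η ≤ 1 := by
    rw [hηdef]
    rw [mul_one_div, div_le_one hs]
    exact hLs
  have hA0 : Jinf ≤ ∫ ω, J (W 0 ω) ∂μ := by
    have h := integral_mono (integrable_const Jinf) (hJint 0) fun ω => hbd (W 0 ω)
    simpa using h
  have hRHS0 : 0 ≤ (2 * ((∫ ω, J (W 0 ω) ∂μ) - Jinf) + L * σ ^ 2) / s := by
    have : 0 ≤ L * σ ^ 2 := by positivity
    have h2 : 0 ≤ 2 * ((∫ ω, J (W 0 ω) ∂μ) - Jinf) := by linarith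
    positivity
  have hgcont : Continuous (gradient J) := by
    refine (LipschitzWith.of_dist_le_mul (K := L.toNNReal) fun a b => ?_).continuous
    rw [dist_eq_norm, dist_eq_norm, Real.coe_toNNReal L hL.le]
    exact hlip a b
  set g : ℕ → ℝ := fun t => ∫ ω, ‖gradient J (W t ω)‖ ^ 2 ∂μ with hg_def
  have hg0 : ∀ t, 0 ≤ g t := fun t => integral_nonneg fun ω => by positivity
  by_cases hGm : ∀ t < T, AEStronglyMeasurable (G t) μ
  case neg =>
    push_neg at hGm
    obtain ⟨t, htT, hnm⟩ := hGm
    have hni : ¬ Integrable (G t) μ := fun h => hnm h.1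
    have h0 : μ[G t | ℱ t] = 0 := condExp_of_not_integrable hni
    have hz : (fun ω => gradient J (W t ω)) =ᵐ[μ] 0 := by
      refine ((hmean t).symm.trans ?_)
      rw [h0]
    have hgt : g t = 0 := by
      refine integral_eq_zero_of_ae ?_
      filter_upwards [hz] with ω hω
      simp only [Pi.zero_apply] at hω
      simp [hω]
    refine le_trans (Finset.inf'_le _ (Finset.mem_range.mpr htT)) ?_
    calc (∫ ω, ‖gradient J (W t ω)‖ ^ 2 ∂μ) = g t := rfl
      _ ≤ _ := by rw [hgt]; exact hRHS0
  case pos =>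
  have key : ∀ t < T, η / 2 * g t
      ≤ (∫ ω, J (W t ω) ∂μ) - (∫ ω, J (W (t+1) ω) ∂μ) + L * η ^ 2 * σ ^ 2 / 2 := by
    intro t htT
    haveI : SigmaFinite (μ.trim (ℱ.le t)) := by infer_instance
    set D : Ω → E := fun ω => gradient J (W t ω) with hD_def
    have hDSM : StronglyMeasurable[ℱ t] D := hgcont.comp_stronglyMeasurable (hWmeas t)
    have hDm : AEStronglyMeasurable D μ := (hDSM.mono (ℱ.le t)).aestronglyMeasurable
    have hDsq_int : Integrable (fun ω => ‖D ω‖ ^ 2) μ := by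
      have hb3 : Integrable (fun ω => 2 * L * (J (W t ω) - Jinf)) μ :=
        ((hJint t).sub (integrable_const Jinf)).const_mul (2*L)
      refine Integrable.mono' hb3 ?_ (Filter.Eventually.of_forall fun ω => ?_)
      · simpa [sq, Pi.mul_def] using hDm.norm.mul hDm.norm
      · rw [Real.norm_eq_abs, abs_of_nonneg (by positivity)]
        exact sgd_grad_sq_le hL hdiff hlip hbd (W t ω)
    have hD2 : MemLp D 2 μ := (memLp_two_iff_integrable_sq_norm hDm).mpr hDsq_int
    have hGm' : AEStronglyMeasurable (G t) μ := hGm t htT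
    have hG2 : MemLp (G t) 2 μ := (memLp_two_iff_integrable_sq_norm hGm').mpr (hGint t)
    have hinner_eq : ∫ ω, ⟪D ω, G t ω⟫ ∂μ = g t := by
      rw [sgd_integral_inner_condexp (ℱ.le t) (hDSM.aestronglyMeasurable) hD2 hG2]
      rw [hg_def]
      refine integral_congr_ae ?_
      filter_upwards [hmean t] with ω hω
      rw [hω, real_inner_self_eq_norm_sq]
    have hinner_int : Integrable (fun ω => ⟪D ω, G t ω⟫) μ := by
      have hb : Integrable (fun ω => (‖D ω‖ ^ 2 + ‖G t ω‖ ^ 2) / 2) μ :=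
        (hDsq_int.add (hGint t)).div_const 2
      refine Integrable.mono' hb (hDm.inner hGm') (Filter.Eventually.of_forall fun ω => ?_)
      rw [Real.norm_eq_abs]
      have h1 := abs_real_inner_le_norm (D ω) (G t ω)
      nlinarith [sq_nonneg (‖D ω‖ - ‖G t ω‖)]
    have hdiff_int : Integrable (fun ω => ‖G t ω - D ω‖ ^ 2) μ := by
      have hb2 : Integrable (fun ω => 2 * ‖G t ω‖ ^ 2 + 2 * ‖D ω‖ ^ 2) μ :=
        ((hGint t).const_mul 2).add (hDsq_int.const_mul 2)
      refine Integrable.mono' hb2 ?_ (Filter.Eventually.of_forall fun ω => ?_)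
      · have := (hGm'.sub hDm).norm
        simpa [sq, Pi.mul_def] using this.mul this
      · rw [Real.norm_eq_abs, abs_of_nonneg (by positivity)]
        nlinarith [mul_self_le_mul_self (norm_nonneg (G t ω - D ω)) (norm_sub_le (G t ω) (D ω)),
          sq_nonneg (‖G t ω‖ - ‖D ω‖)]
    have hvar_int : ∫ ω, ‖G t ω - D ω‖ ^ 2 ∂μ ≤ σ ^ 2 := by
      have h1 : ∫ ω, (μ[fun ω' => ‖G t ω' - D ω'‖ ^ 2 | ℱ t]) ω ∂μ
          = ∫ ω, ‖G t ω - D ω‖ ^ 2 ∂μ := integral_condExp (ℱ.le t)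
      have h2 : ∫ ω, (μ[fun ω' => ‖G t ω' - D ω'‖ ^ 2 | ℱ t]) ω ∂μ
          ≤ ∫ _ω, σ ^ 2 ∂μ :=
        integral_mono_ae integrable_condExp (integrable_const _) (hvar t)
      rw [h1] at h2
      simpa using h2
    have hGsq_le : ∫ ω, ‖G t ω‖ ^ 2 ∂μ ≤ σ ^ 2 + g t := by
      have hpt : ∀ ω, ‖G t ω‖ ^ 2
          = ‖G t ω - D ω‖ ^ 2 + 2 * ⟪D ω, G t ω⟫ - ‖D ω‖ ^ 2 := by
        intro ω
        have := norm_sub_sq_real (G t ω) (D ω)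
        rw [real_inner_comm] at this
        linarith
      calc ∫ ω, ‖G t ω‖ ^ 2 ∂μ
          = ∫ ω, (‖G t ω - D ω‖ ^ 2 + 2 * ⟪D ω, G t ω⟫ - ‖D ω‖ ^ 2) ∂μ := by
            exact integral_congr_ae (Filter.Eventually.of_forall fun ω => hpt ω)
        _ = (∫ ω, ‖G t ω - D ω‖ ^ 2 ∂μ) + 2 * (∫ ω, ⟪D ω, G t ω⟫ ∂μ) - ∫ ω, ‖D ω‖ ^ 2 ∂μ := by
            have hi1 : Integrable (fun ω => ‖G t ω - D ω‖ ^ 2 + 2 * ⟪D ω, G t ω⟫) μ :=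
              hdiff_int.add (hinner_int.const_mul 2)
            rw [integral_sub hi1 hDsq_int,
              integral_add hdiff_int (hinner_int.const_mul 2), integral_const_mul _ _]
        _ = (∫ ω, ‖G t ω - D ω‖ ^ 2 ∂μ) + 2 * g t - g t := by rw [hinner_eq, hg_def]
        _ ≤ σ ^ 2 + g t := by linarith
    have hptwise : ∀ ω, J (W (t+1) ω)
        ≤ J (W t ω) - η * ⟪D ω, G t ω⟫ + L / 2 * η ^ 2 * ‖G t ω‖ ^ 2 := by
      intro ω
      have h := sgd_descent hL.le hdiff hlip (W t ω) (W (t+1) ω)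
      have he : W (t+1) ω - W t ω = -(η • G t ω) := by rw [hrec t ω]; abel
      rw [he, inner_neg_right, real_inner_smul_right, norm_neg, norm_smul,
        Real.norm_eq_abs, abs_of_nonneg hη.le, mul_pow] at h
      simp only [hD_def]
      nlinarith [h]
    have hstep : ∫ ω, J (W (t+1) ω) ∂μ
        ≤ (∫ ω, J (W t ω) ∂μ) - η * g t + L / 2 * η ^ 2 * (σ ^ 2 + g t) := by
      have h1 : ∫ ω, J (W (t+1) ω) ∂μ
          ≤ ∫ ω, (J (W t ω) - η * ⟪D ω, G t ω⟫ + L / 2 * η ^ 2 * ‖G t ω‖ ^ 2) ∂μ := by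
        have hi2 : Integrable (fun ω => J (W t ω) - η * ⟪D ω, G t ω⟫
            + L / 2 * η ^ 2 * ‖G t ω‖ ^ 2) μ :=
          ((hJint t).sub (hinner_int.const_mul η)).add ((hGint t).const_mul (L / 2 * η ^ 2))
        refine integral_mono (hJint (t+1)) hi2 fun ω => hptwise ω
      have h2 : ∫ ω, (J (W t ω) - η * ⟪D ω, G t ω⟫ + L / 2 * η ^ 2 * ‖G t ω‖ ^ 2) ∂μ
          = (∫ ω, J (W t ω) ∂μ) - η * g t + L / 2 * η ^ 2 * ∫ ω, ‖G t ω‖ ^ 2 ∂μ := by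
        have hi3 : Integrable (fun ω => J (W t ω) - η * ⟪D ω, G t ω⟫) μ :=
          (hJint t).sub (hinner_int.const_mul η)
        rw [integral_add hi3 ((hGint t).const_mul (L / 2 * η ^ 2)),
          integral_sub (hJint t) (hinner_int.const_mul η),
          integral_const_mul _ _, integral_const_mul _ _, hinner_eq]
      rw [h2] at h1
      have h3 : L / 2 * η ^ 2 * ∫ ω, ‖G t ω‖ ^ 2 ∂μ ≤ L / 2 * η ^ 2 * (σ ^ 2 + g t) := by
        refine mul_le_mul_of_nonneg_left hGsq_le (by positivity)
      linarith
    have hineq : L * η ^ 2 * g t ≤ η * g t := by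
      calc L * η ^ 2 * g t = L * η * (η * g t) := by ring
        _ ≤ η * g t := mul_le_of_le_one_left (mul_nonneg hη.le (hg0 t)) hLη
    have hexp : L / 2 * η ^ 2 * (σ ^ 2 + g t) = L * η ^ 2 * σ ^ 2 / 2 + L * η ^ 2 * g t / 2 := by
      ring
    rw [hexp] at hstep
    linarith
  -- summation
  have hsum : η / 2 * (∑ t ∈ Finset.range T, g t)
      ≤ ((∫ ω, J (W 0 ω) ∂μ) - Jinf) + (T:ℝ) * (L * η ^ 2 * σ ^ 2 / 2) := by
    have h1 : ∑ t ∈ Finset.range T, (η / 2 * g t)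
        ≤ ∑ t ∈ Finset.range T, (((∫ ω, J (W t ω) ∂μ) - (∫ ω, J (W (t+1) ω) ∂μ))
          + L * η ^ 2 * σ ^ 2 / 2) :=
      Finset.sum_le_sum fun t ht => key t (Finset.mem_range.mp ht)
    rw [← Finset.mul_sum] at h1
    rw [Finset.sum_add_distrib, Finset.sum_range_sub' (fun t => ∫ ω, J (W t ω) ∂μ) T,
      Finset.sum_const, Finset.card_range, nsmul_eq_mul] at h1
    have h2 : Jinf ≤ ∫ ω, J (W T ω) ∂μ := by
      have h := integral_mono (integrable_const Jinf) (hJint T) fun ω => hbd (W T ω)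
      simpa using h
    linarith
  set m := (Finset.range T).inf' (Finset.nonempty_range_iff.mpr (by omega))
      (fun t => ∫ ω, ‖gradient J (W t ω)‖ ^ 2 ∂μ) with hm_def
  have hmS : (T:ℝ) * m ≤ ∑ t ∈ Finset.range T, g t := by
    have := Finset.card_nsmul_le_sum (Finset.range T) g m
      (fun i hi => Finset.inf'_le _ hi)
    rwa [Finset.card_range, nsmul_eq_mul] at this
  have hchain : η / 2 * ((T:ℝ) * m) ≤ ((∫ ω, J (W 0 ω) ∂μ) - Jinf)
      + (T:ℝ) * (L * η ^ 2 * σ ^ 2 / 2) :=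
    (mul_le_mul_of_nonneg_left hmS (by positivity)).trans hsum
  rw [le_div_iff₀ hs]
  have e1 : η / 2 * ((T:ℝ) * m) = m * s / 2 := by
    rw [hηdef, ← hss]; field_simp [hs.ne']
  have e2 : (T:ℝ) * (L * η ^ 2 * σ ^ 2 / 2) = L * σ ^ 2 / 2 := by
    rw [hηdef, ← hss]; field_simp [hs.ne']
  rw [e1, e2] at hchain
  linarith
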